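/- Let (M, ρ, μ) be a doubling metric measure space with exponent d and define D_{δ,σ}(x,y) := (μ(B(x,δ))μ(B(y,δ)))^{-1/2}(1+ρ(x,y)/δ)^{-σ}. If 0 < p < ∞ and σ > d(1/2 + 1/p), then for all x ∈ M and δ > 0: (∫_M D_{δ,σ}(x,y)^p dμ(y))^{1/p} ≤ c(p) μ(B(x,δ))^{1/p − 1}, where c(p) = (2^{dp/2}/(2^{-d} − 2^{-(σ−d/2)p}))^{1/p}. -/

import Mathlib

open MeasureTheory Metric
open scoped ENNReal NNReal

/-- The localization kernel `D_{δ,σ}(x,y)`. -/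
noncomputable def Dker {M : Type*} [MetricSpace M] [MeasurableSpace M]
    (μ : Measure M) (δ σ : ℝ) (x y : M) : ℝ≥0∞ :=
  (μ (ball x δ) * μ (ball y δ)) ^ (-(1 / 2 : ℝ)) *
    ENNReal.ofReal ((1 + dist x y / δ) ^ (-σ))

lemma doubling_iter {M : Type*} [MetricSpace M] [MeasurableSpace M]
    (μ : Measure M) (d : ℝ)
    (hdoub : ∀ (x : M) (r : ℝ), 0 < r →
      μ (ball x (2 * r)) ≤ ENNReal.ofReal ((2 : ℝ) ^ d) * μ (ball x r)) :
    ∀ (k : ℕ) (x : M) (r : ℝ), 0 < r →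
      μ (ball x ((2 : ℝ) ^ k * r)) ≤ (ENNReal.ofReal ((2 : ℝ) ^ d)) ^ k * μ (ball x r) := by
  intro k
  induction k with
  | zero => intro x r hr; simp
  | succ k ih =>
    intro x r hr
    have h1 : (2 : ℝ) ^ (k + 1) * r = 2 * ((2 : ℝ) ^ k * r) := by ring
    have h2 : (0 : ℝ) < (2 : ℝ) ^ k * r := by positivity
    calc μ (ball x ((2 : ℝ) ^ (k + 1) * r)) = μ (ball x (2 * ((2 : ℝ) ^ k * r))) := by rw [h1]
      _ ≤ ENNReal.ofReal ((2 : ℝ) ^ d) * μ (ball x ((2 : ℝ) ^ k * r)) := hdoub x _ h2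
      _ ≤ ENNReal.ofReal ((2 : ℝ) ^ d) * ((ENNReal.ofReal ((2 : ℝ) ^ d)) ^ k * μ (ball x r)) :=
          mul_le_mul_right (ih x r hr) _
      _ = (ENNReal.ofReal ((2 : ℝ) ^ d)) ^ (k + 1) * μ (ball x r) := by ring

lemma ball_meas_compare {M : Type*} [MetricSpace M] [MeasurableSpace M]
    (μ : Measure M) (d : ℝ) (hd : 0 < d)
    (hiter : ∀ (k : ℕ) (x : M) (r : ℝ), 0 < r →
      μ (ball x ((2 : ℝ) ^ k * r)) ≤ (ENNReal.ofReal ((2 : ℝ) ^ d)) ^ k * μ (ball x r))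
    (δ : ℝ) (hδ : 0 < δ) (x y : M) :
    μ (ball x δ) ≤ ENNReal.ofReal ((2 : ℝ) ^ d * (1 + dist x y / δ) ^ d) * μ (ball y δ) := by
  set t : ℝ := 1 + dist x y / δ with ht_def
  have ht1 : (1 : ℝ) ≤ t := by
    rw [ht_def]
    have : 0 ≤ dist x y / δ := by positivity
    linarith
  have ht0 : (0 : ℝ) < t := by linarith
  set L : ℝ := Real.logb 2 t with hL_def
  have hL0 : 0 ≤ L := Real.logb_nonneg one_lt_two ht1
  set k : ℕ := ⌈L⌉₊ with hk_def
  have htk : t ≤ (2 : ℝ) ^ k := by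
    have h1 : t = (2 : ℝ) ^ L := (Real.rpow_logb two_pos (by norm_num) ht0).symm
    have h2 : (2 : ℝ) ^ L ≤ (2 : ℝ) ^ (k : ℝ) :=
      Real.rpow_le_rpow_of_exponent_le one_le_two (Nat.le_ceil L)
    rw [h1]
    rw [Real.rpow_natCast] at h2
    exact h2
  have hk2 : ((2 : ℝ) ^ k : ℝ) ≤ 2 * t := by
    have h1 : (k : ℝ) ≤ L + 1 := (Nat.ceil_lt_add_one hL0).le
    have h2 : (2 : ℝ) ^ (k : ℝ) ≤ (2 : ℝ) ^ (L + 1) :=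
      Real.rpow_le_rpow_of_exponent_le one_le_two h1
    rw [Real.rpow_natCast] at h2
    calc ((2:ℝ)^k : ℝ) ≤ (2 : ℝ) ^ (L + 1) := h2
      _ = (2 : ℝ) ^ L * 2 := by rw [Real.rpow_add two_pos, Real.rpow_one]
      _ = 2 * t := by rw [Real.rpow_logb two_pos (by norm_num) ht0]; ring
  have hsub : ball x δ ⊆ ball y ((2 : ℝ) ^ k * δ) := by
    intro z hz
    rw [mem_ball] at hz ⊢
    have h3 : dist z y ≤ dist z x + dist x y := dist_triangle z x y
    have h4 : δ + dist x y = δ * t := by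
      rw [ht_def]
      field_simp
    have h5 : δ * t ≤ δ * (2 : ℝ) ^ k := by
      exact mul_le_mul_of_nonneg_left htk hδ.le
    calc dist z y ≤ dist z x + dist x y := h3
      _ < δ + dist x y := by linarith [hz]
      _ = δ * t := h4
      _ ≤ (2 : ℝ) ^ k * δ := by linarith [h5]
  have hmeas : μ (ball x δ) ≤ (ENNReal.ofReal ((2 : ℝ) ^ d)) ^ k * μ (ball y δ) :=
    le_trans (measure_mono hsub) (hiter k y δ hδ)
  refine hmeas.trans (mul_le_mul_left ?_ _)
  rw [← ENNReal.ofReal_pow (by positivity)]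
  apply ENNReal.ofReal_le_ofReal
  have h6 : ((2 : ℝ) ^ d) ^ k = ((2 : ℝ) ^ (k : ℕ) : ℝ) ^ d := by
    rw [← Real.rpow_natCast ((2:ℝ)^d) k, ← Real.rpow_natCast (2:ℝ) k,
      ← Real.rpow_mul (by norm_num), ← Real.rpow_mul (by norm_num), mul_comm]
  rw [h6, ← Real.mul_rpow (by norm_num) ht0.le]
  exact Real.rpow_le_rpow (by positivity) hk2 hd.le

lemma tail_integral_bound {M : Type*} [MetricSpace M] [MeasurableSpace M]
    [OpensMeasurableSpace M]
    (μ : Measure M) (d : ℝ) (hd : 0 < d)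
    (hiter : ∀ (k : ℕ) (x : M) (r : ℝ), 0 < r →
      μ (ball x ((2 : ℝ) ^ k * r)) ≤ (ENNReal.ofReal ((2 : ℝ) ^ d)) ^ k * μ (ball x r))
    (τ δ : ℝ) (hτ : d < τ) (hδ : 0 < δ) (x : M) :
    ∫⁻ y, ENNReal.ofReal ((1 + dist x y / δ) ^ (-τ)) ∂μ
      ≤ ENNReal.ofReal ((2 : ℝ) ^ d) * (1 - ENNReal.ofReal ((2 : ℝ) ^ (d - τ)))⁻¹
        * μ (ball x δ) := by
  classical
  set q : ℝ≥0∞ := ENNReal.ofReal ((2 : ℝ) ^ (-τ)) with hq_def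
  set C : ℝ≥0∞ := ENNReal.ofReal ((2 : ℝ) ^ d) with hC_def
  set g : ℕ → M → ℝ≥0∞ :=
    fun j => (ball x ((2 : ℝ) ^ (j + 1) * δ)).indicator (fun _ => q ^ j) with hg_def
  have hτ0 : 0 < τ := hd.trans hτ
  have hpt : ∀ y, ENNReal.ofReal ((1 + dist x y / δ) ^ (-τ)) ≤ ∑' j, g j y := by
    intro y
    have hex : ∃ j : ℕ, dist x y < (2 : ℝ) ^ (j + 1) * δ := by
      obtain ⟨n, hn⟩ := exists_nat_gt (dist x y / δ)
      refine ⟨n, ?_⟩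
      have h1 : dist x y < n * δ := by
        rwa [div_lt_iff₀ hδ] at hn
      have h2 : (n : ℝ) ≤ (2 : ℝ) ^ (n + 1) := by
        have := Nat.lt_two_pow_self (n := n)
        have h3 : (n : ℝ) < (2 : ℝ) ^ n := by exact_mod_cast this
        have h4 : (2 : ℝ) ^ n ≤ (2 : ℝ) ^ (n + 1) :=
          pow_le_pow_right₀ one_le_two (Nat.le_succ n)
        linarith
      calc dist x y < n * δ := h1
        _ ≤ (2 : ℝ) ^ (n + 1) * δ := mul_le_mul_of_nonneg_right h2 hδ.le
    obtain ⟨j, hj, hjmin⟩ : ∃ j : ℕ, dist x y < (2 : ℝ) ^ (j + 1) * δ ∧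
        ∀ m < j, ¬ (dist x y < (2 : ℝ) ^ (m + 1) * δ) :=
      ⟨Nat.find hex, Nat.find_spec hex, fun m hm => Nat.find_min hex hm⟩
    refine le_trans ?_ (ENNReal.le_tsum j)
    have hmem : y ∈ ball x ((2 : ℝ) ^ (j + 1) * δ) := by
      rw [mem_ball, dist_comm]; exact hj
    have hgj : g j y = q ^ j := by
      simp [hg_def, Set.indicator_of_mem hmem]
    rw [hgj, hq_def, ← ENNReal.ofReal_pow (by positivity)]
    apply ENNReal.ofReal_le_ofReal
    have h2j : ((2 : ℝ) ^ j : ℝ) ≤ 1 + dist x y / δ := by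
      cases j with
      | zero => simp; positivity
      | succ k =>
        have hmin : ¬ (dist x y < (2 : ℝ) ^ (k + 1) * δ) := hjmin k (Nat.lt_succ_self k)
        push_neg at hmin
        have h5 : (2 : ℝ) ^ (k + 1) ≤ dist x y / δ := by
          rw [le_div_iff₀ hδ]; exact hmin
        linarith
    have h6 : ((2 : ℝ) ^ (-τ)) ^ j = ((2 : ℝ) ^ (j : ℕ) : ℝ) ^ (-τ) := by
      rw [← Real.rpow_natCast ((2 : ℝ) ^ (-τ)) j, ← Real.rpow_natCast (2 : ℝ) j,
        ← Real.rpow_mul (by norm_num), ← Real.rpow_mul (by norm_num), mul_comm]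
    rw [h6]
    exact Real.rpow_le_rpow_of_nonpos (by positivity) h2j (by linarith)
  have hmeasg : ∀ j, AEMeasurable (g j) μ :=
    fun j => (Measurable.indicator measurable_const measurableSet_ball).aemeasurable
  calc ∫⁻ y, ENNReal.ofReal ((1 + dist x y / δ) ^ (-τ)) ∂μ
      ≤ ∫⁻ y, ∑' j, g j y ∂μ := lintegral_mono hpt
    _ = ∑' j, ∫⁻ y, g j y ∂μ := lintegral_tsum hmeasg
    _ = ∑' j, q ^ j * μ (ball x ((2 : ℝ) ^ (j + 1) * δ)) := by
        refine tsum_congr fun j => ?_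
        simp [hg_def, lintegral_indicator_const measurableSet_ball]
    _ ≤ ∑' j, q ^ j * (C ^ (j + 1) * μ (ball x δ)) :=
        ENNReal.tsum_le_tsum fun j => mul_le_mul_right (hiter (j + 1) x δ hδ) _
    _ = ∑' j, C * (q * C) ^ j * μ (ball x δ) := by
        refine tsum_congr fun j => ?_
        rw [mul_pow, pow_succ]; ring
    _ = C * (∑' j, (q * C) ^ j) * μ (ball x δ) := by
        rw [ENNReal.tsum_mul_right, ENNReal.tsum_mul_left]
    _ = C * (1 - q * C)⁻¹ * μ (ball x δ) := by rw [ENNReal.tsum_geometric]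
    _ = ENNReal.ofReal ((2 : ℝ) ^ d) * (1 - ENNReal.ofReal ((2 : ℝ) ^ (d - τ)))⁻¹
        * μ (ball x δ) := by
        congr 2
        rw [hq_def, hC_def, ← ENNReal.ofReal_mul (by positivity), ← Real.rpow_add two_pos]
        ring_nf

theorem Dker_Lp_norm {M : Type*} [MetricSpace M] [MeasurableSpace M]
    [OpensMeasurableSpace M]
    (μ : Measure M) (d : ℝ) (hd : 0 < d)
    (hpos : ∀ (x : M) (r : ℝ), 0 < r → 0 < μ (ball x r))
    (hfin : ∀ (x : M) (r : ℝ), 0 < r → μ (ball x r) < ⊤)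
    (hdoub : ∀ (x : M) (r : ℝ), 0 < r →
      μ (ball x (2 * r)) ≤ ENNReal.ofReal ((2 : ℝ) ^ d) * μ (ball x r))
    (p σ δ : ℝ) (hp : 0 < p) (hσ : d * (1 / 2 + 1 / p) < σ) (hδ : 0 < δ) (x : M) :
    (∫⁻ y, (Dker μ δ σ x y) ^ p ∂μ) ^ (1 / p)
      ≤ ENNReal.ofReal
          (((2 : ℝ) ^ (d * p / 2) / ((2 : ℝ) ^ (-d) - (2 : ℝ) ^ (-(σ - d / 2) * p))) ^ (1 / p))
          * μ (ball x δ) ^ (1 / p - 1) := by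
  classical
  have hiter := doubling_iter μ d hdoub
  set τ : ℝ := (σ - d / 2) * p with hτ_def
  have hτd : d < τ := by
    have h1 : d / p * p = d := div_mul_cancel₀ d hp.ne'
    have h2 : d * (1 / 2 + 1 / p) = d / 2 + d / p := by ring
    have h3 : d / p < σ - d / 2 := by rw [h2] at hσ; linarith
    have h4 := mul_lt_mul_of_pos_right h3 hp
    rw [h1] at h4
    exact h4
  set a : ℝ≥0∞ := μ (ball x δ) with ha_def
  have ha0 : a ≠ 0 := (hpos x δ hδ).ne'
  have hat : a ≠ ⊤ := (hfin x δ hδ).ne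
  have hap_pos : 0 < a ^ p := ENNReal.rpow_pos (hpos x δ hδ) hat
  have hap_ne_top : a ^ (-p) ≠ ⊤ := by
    rw [ENNReal.rpow_neg]
    exact ENNReal.inv_ne_top.mpr hap_pos.ne'
  -- pointwise bound
  have hpt : ∀ y, Dker μ δ σ x y ^ p ≤ ENNReal.ofReal ((2:ℝ) ^ (d * p / 2)) *
      (a ^ (-p) * ENNReal.ofReal ((1 + dist x y / δ) ^ (-τ))) := by
    intro y
    set b : ℝ≥0∞ := μ (ball y δ) with hb_def
    have hb0 : b ≠ 0 := (hpos y δ hδ).ne'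
    have hbt : b ≠ ⊤ := (hfin y δ hδ).ne
    set t : ℝ := 1 + dist x y / δ with ht_def
    have ht0 : (0 : ℝ) < t := by
      rw [ht_def]
      have h0 : 0 ≤ dist x y / δ := by positivity
      linarith
    set K : ℝ≥0∞ := ENNReal.ofReal ((2:ℝ) ^ d * t ^ d) with hK_def
    have hK0 : K ≠ 0 := by
      rw [hK_def]
      simp only [ne_eq, ENNReal.ofReal_eq_zero, not_le]
      positivity
    have hKt : K ≠ ⊤ := ENNReal.ofReal_ne_top
    have hB : a ≤ K * b := ball_meas_compare μ d hd hiter δ hδ x y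
    have h1 : K⁻¹ * a ≤ b := by
      have h2 : K⁻¹ * a ≤ K⁻¹ * (K * b) := mul_le_mul_right hB _
      rwa [← mul_assoc, ENNReal.inv_mul_cancel hK0 hKt, one_mul] at h2
    have h2 : K⁻¹ * (a * a) ≤ a * b := by
      calc K⁻¹ * (a * a) = K⁻¹ * a * a := by ring
        _ ≤ b * a := mul_le_mul_left h1 a
        _ = a * b := mul_comm _ _
    -- core inequality
    have hcore : (a * b) ^ (-(p/2)) ≤ K ^ (p/2) * (a * a) ^ (-(p/2)) := by
      have h3 : (a * b) ^ (-(p/2)) ≤ (K⁻¹ * (a * a)) ^ (-(p/2)) := by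
        rw [ENNReal.rpow_neg, ENNReal.rpow_neg]
        exact ENNReal.inv_le_inv.mpr (ENNReal.rpow_le_rpow h2 (by positivity))
      have h4 : (K⁻¹ * (a * a)) ^ (-(p/2)) = K ^ (p/2) * (a * a) ^ (-(p/2)) := by
        rw [ENNReal.mul_rpow_of_ne_top (ENNReal.inv_ne_top.mpr hK0)
          (ENNReal.mul_ne_top hat hat), ENNReal.inv_rpow, ENNReal.rpow_neg, inv_inv]
      rw [← h4]; exact h3
    have haa : (a * a) ^ (-(p/2)) = a ^ (-p) := by
      have h5 : a * a = a ^ (2 : ℝ) := by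
        rw [show (2:ℝ) = (1:ℝ) + 1 by norm_num, ENNReal.rpow_add _ _ ha0 hat,
          ENNReal.rpow_one]
      rw [h5, ← ENNReal.rpow_mul]
      congr 1
      ring
    have hKp : K ^ (p/2) = ENNReal.ofReal ((2:ℝ) ^ (d * p / 2) * t ^ (d * p / 2)) := by
      rw [hK_def, ENNReal.ofReal_rpow_of_pos (by positivity),
        Real.mul_rpow (by positivity) (by positivity),
        ← Real.rpow_mul (by norm_num), ← Real.rpow_mul ht0.le]
      ring_nf
    have hDval : Dker μ δ σ x y ^ p =
        (a * b) ^ (-(p/2)) * ENNReal.ofReal (t ^ (-(σ * p))) := by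
      rw [Dker, ENNReal.mul_rpow_of_nonneg _ _ hp.le, ← ENNReal.rpow_mul,
        ENNReal.ofReal_rpow_of_pos (by positivity), ← Real.rpow_mul ht0.le]
      rw [show -(1/2 : ℝ) * p = -(p/2) from by ring, show -σ * p = -(σ * p) from by ring]
    rw [hDval]
    calc (a * b) ^ (-(p/2)) * ENNReal.ofReal (t ^ (-(σ * p)))
        ≤ K ^ (p/2) * (a * a) ^ (-(p/2)) * ENNReal.ofReal (t ^ (-(σ * p))) :=
          mul_le_mul_left hcore _
      _ = ENNReal.ofReal ((2:ℝ) ^ (d * p / 2)) * (a ^ (-p) * ENNReal.ofReal (t ^ (-τ))) := by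
          rw [haa, hKp, ENNReal.ofReal_mul (by positivity)]
          have e7 : ENNReal.ofReal (t ^ (d * p / 2)) * ENNReal.ofReal (t ^ (-(σ * p))) =
              ENNReal.ofReal (t ^ (-τ)) := by
            rw [← ENNReal.ofReal_mul (by positivity), ← Real.rpow_add ht0]
            congr 1
            rw [hτ_def]; ring_nf
          calc ENNReal.ofReal ((2:ℝ) ^ (d * p / 2)) * ENNReal.ofReal (t ^ (d * p / 2)) *
                a ^ (-p) * ENNReal.ofReal (t ^ (-(σ * p)))
              = ENNReal.ofReal ((2:ℝ) ^ (d * p / 2)) * (a ^ (-p) *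
                  (ENNReal.ofReal (t ^ (d * p / 2)) * ENNReal.ofReal (t ^ (-(σ * p))))) := by
                ring
            _ = ENNReal.ofReal ((2:ℝ) ^ (d * p / 2)) * (a ^ (-p) * ENNReal.ofReal (t ^ (-τ))) := by
                rw [e7]
  have hτpos : 0 < τ := hd.trans hτd
  have hr1 : (2:ℝ) ^ (d - τ) < 1 :=
    Real.rpow_lt_one_of_one_lt_of_neg one_lt_two (by linarith)
  have hr0 : (0:ℝ) < (2:ℝ) ^ (d - τ) := Real.rpow_pos_of_pos two_pos _
  have hint : ∫⁻ y, Dker μ δ σ x y ^ p ∂μ ≤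
      ENNReal.ofReal ((2:ℝ) ^ (d * p / 2) / ((2:ℝ) ^ (-d) - (2:ℝ) ^ (-τ))) * a ^ (1 - p) := by
    calc ∫⁻ y, Dker μ δ σ x y ^ p ∂μ
        ≤ ∫⁻ y, ENNReal.ofReal ((2:ℝ) ^ (d * p / 2)) *
            (a ^ (-p) * ENNReal.ofReal ((1 + dist x y / δ) ^ (-τ))) ∂μ := lintegral_mono hpt
      _ = ENNReal.ofReal ((2:ℝ) ^ (d * p / 2)) *
            (a ^ (-p) * ∫⁻ y, ENNReal.ofReal ((1 + dist x y / δ) ^ (-τ)) ∂μ) := by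
          rw [lintegral_const_mul' _ _ ENNReal.ofReal_ne_top,
            lintegral_const_mul' _ _ hap_ne_top]
      _ ≤ ENNReal.ofReal ((2:ℝ) ^ (d * p / 2)) *
            (a ^ (-p) * (ENNReal.ofReal ((2:ℝ) ^ d) *
              (1 - ENNReal.ofReal ((2:ℝ) ^ (d - τ)))⁻¹ * a)) := by
          gcongr
          exact tail_integral_bound μ d hd hiter τ δ hτd hδ x
      _ = ENNReal.ofReal ((2:ℝ) ^ (d * p / 2) / ((2:ℝ) ^ (-d) - (2:ℝ) ^ (-τ))) *
            a ^ (1 - p) := by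
          have e1 : (1 : ℝ≥0∞) - ENNReal.ofReal ((2:ℝ) ^ (d - τ)) =
              ENNReal.ofReal (1 - (2:ℝ) ^ (d - τ)) := by
            rw [← ENNReal.ofReal_one, ← ENNReal.ofReal_sub _ hr0.le]
          have e2 : (ENNReal.ofReal (1 - (2:ℝ) ^ (d - τ)))⁻¹ =
              ENNReal.ofReal ((1 - (2:ℝ) ^ (d - τ))⁻¹) :=
            (ENNReal.ofReal_inv_of_pos (by linarith)).symm
          have e3 : a ^ (-p) * a = a ^ (1 - p) := by
            nth_rewrite 2 [← ENNReal.rpow_one a]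
            rw [← ENNReal.rpow_add _ _ ha0 hat]
            congr 1
            ring
          have e4 : (2:ℝ) ^ (d * p / 2) * ((2:ℝ) ^ d * (1 - (2:ℝ) ^ (d - τ))⁻¹) =
              (2:ℝ) ^ (d * p / 2) / ((2:ℝ) ^ (-d) - (2:ℝ) ^ (-τ)) := by
            have key : (2:ℝ) ^ (-d) - (2:ℝ) ^ (-τ) = (2:ℝ) ^ (-d) * (1 - (2:ℝ) ^ (d - τ)) := by
              rw [mul_sub, mul_one, ← Real.rpow_add two_pos]
              congr 2
              ring
            rw [key, Real.rpow_neg (by norm_num : (0:ℝ) ≤ 2) d]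
            have h2d : (2:ℝ) ^ d ≠ 0 := by positivity
            have hsub : (1 : ℝ) - (2:ℝ) ^ (d - τ) ≠ 0 := by linarith
            field_simp
          rw [e1, e2]
          calc ENNReal.ofReal ((2:ℝ) ^ (d * p / 2)) * (a ^ (-p) *
                (ENNReal.ofReal ((2:ℝ) ^ d) * ENNReal.ofReal ((1 - (2:ℝ) ^ (d - τ))⁻¹) * a))
              = ENNReal.ofReal ((2:ℝ) ^ (d * p / 2)) * ENNReal.ofReal ((2:ℝ) ^ d) *
                  ENNReal.ofReal ((1 - (2:ℝ) ^ (d - τ))⁻¹) * (a ^ (-p) * a) := by ring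
            _ = ENNReal.ofReal ((2:ℝ) ^ (d * p / 2) / ((2:ℝ) ^ (-d) - (2:ℝ) ^ (-τ))) *
                  a ^ (1 - p) := by
                rw [e3, ← ENNReal.ofReal_mul (by positivity),
                  ← ENNReal.ofReal_mul (by positivity)]
                congr 1
                rw [← e4]
                ring_nf
  have hstep := ENNReal.rpow_le_rpow hint (by positivity : (0:ℝ) ≤ 1 / p)
  refine hstep.trans (le_of_eq ?_)
  have hC0 : (0:ℝ) < (2:ℝ) ^ (d * p / 2) / ((2:ℝ) ^ (-d) - (2:ℝ) ^ (-τ)) := by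
    have key : (2:ℝ) ^ (-d) - (2:ℝ) ^ (-τ) = (2:ℝ) ^ (-d) * (1 - (2:ℝ) ^ (d - τ)) := by
      rw [mul_sub, mul_one, ← Real.rpow_add two_pos]
      congr 2
      ring
    rw [key]
    have : (0:ℝ) < 1 - (2:ℝ) ^ (d - τ) := by linarith
    positivity
  rw [ENNReal.mul_rpow_of_nonneg _ _ (by positivity : (0:ℝ) ≤ 1/p),
    ENNReal.ofReal_rpow_of_pos hC0, ← ENNReal.rpow_mul,
    show (1 - p) * (1 / p) = 1 / p - 1 by field_simp,
    show -(σ - d / 2) * p = -τ by rw [hτ_def]; ring]
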